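/- arXiv:2410.02400 — 3 statements merged into one kernel-verified Lean document; each statement's English description precedes it below -/
import Mathlib

section
/- Let f_t: ℝ^d → ℝ be μ-strongly convex and differentiable, let S_t ⊂ ℝ^d be closed, nonempty, convex with max_{a ∈ S_t} dist(S_{t+1}, a) ≤ ω_{t+1}, and consider x_{t+1} = proj_{S_{t+1}}(x_t − η_t ∇f_t(x_t)) with η_t = 1/(tμ), ‖∇f_t(x_t)‖ ≤ G, x_1 ∈ S_1. Then for any u ∈ ℝ^d, ∑_{t=1}^T (f_t(x_t) − f_t(u)) ≤ (G²/μ)(1 + log T) + ∑_{t=1}^{T−1} (ω_{t+1}/η_t + G) dist(S_{t+1}, u). -/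
set_option maxHeartbeats 1000000

open RealInnerProductSpace Finset

private lemma proj_contract {E : Type*} [NormedAddCommGroup E] [InnerProductSpace ℝ E]
    {K : Set E} (hK : Convex ℝ K) {v y : E} (hv : v ∈ K)
    (hmin : ∀ z ∈ K, ‖v - y‖ ≤ ‖z - y‖) {z : E} (hz : z ∈ K) :
    ‖v - z‖ ≤ ‖y - z‖ := by
  have hobtuse : ∀ w ∈ K, ⟪y - v, w - v⟫ ≤ 0 := by
    rw [← norm_eq_iInf_iff_real_inner_le_zero hK hv]
    haveI : Nonempty K := ⟨⟨v, hv⟩⟩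
    apply le_antisymm
    · refine le_ciInf fun w => ?_
      rw [norm_sub_rev y, norm_sub_rev y]
      exact hmin w w.2
    · have hbdd : BddBelow (Set.range fun w : K => ‖y - (w:E)‖) :=
        ⟨0, by rintro b ⟨w, rfl⟩; exact norm_nonneg _⟩
      exact ciInf_le hbdd ⟨v, hv⟩
  have h1 : ‖y - z‖ ^ 2 = ‖y - v‖ ^ 2 + 2 * ⟪y - v, v - z⟫ + ‖v - z‖ ^ 2 := by
    rw [← norm_add_sq_real, sub_add_sub_cancel]
  have h2 : ⟪y - v, v - z⟫ = - ⟪y - v, z - v⟫ := by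
    rw [← inner_neg_right, neg_sub]
  have h3 := hobtuse z hz
  have h4 := norm_nonneg (y - v)
  have h5 := norm_nonneg (v - z)
  have h6 := norm_nonneg (y - z)
  nlinarith [sq_nonneg ‖y - v‖]

private lemma ogd_div_helper (a b c : ℝ) : a / (2 * b) * (1 / c) = 1 / (2 * c * b) * a := by
  ring

private lemma harmonic_le_log {T : ℕ} (hT : 1 ≤ T) :
    ∑ t ∈ Icc 1 T, (1 : ℝ) / t ≤ 1 + Real.log T := by
  induction T, hT using Nat.le_induction with
  | base => simp
  | succ n hn ih =>
    rw [Finset.sum_Icc_succ_top (by omega : 1 ≤ n + 1)]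
    have hn0 : (0:ℝ) < n := by exact_mod_cast hn
    have hn1 : (0:ℝ) < (n:ℝ) + 1 := by linarith
    have hlog : Real.log ((n:ℝ) / ((n:ℝ)+1)) ≤ (n:ℝ)/((n:ℝ)+1) - 1 :=
      Real.log_le_sub_one_of_pos (by positivity)
    rw [Real.log_div (ne_of_gt hn0) (ne_of_gt hn1)] at hlog
    have : (n:ℝ)/((n:ℝ)+1) - 1 = -(1/((n:ℝ)+1)) := by field_simp; ring
    rw [this] at hlog
    push_cast
    linarith

theorem ogd_strongly_convex_time_varying_sets_regret {d T : ℕ} (hT : 1 ≤ T)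
    (f : ℕ → EuclideanSpace ℝ (Fin d) → ℝ)
    (g : ℕ → EuclideanSpace ℝ (Fin d) → EuclideanSpace ℝ (Fin d))
    (S : ℕ → Set (EuclideanSpace ℝ (Fin d)))
    (x : ℕ → EuclideanSpace ℝ (Fin d))
    (ω : ℕ → ℝ) (μ G : ℝ) (hμ : 0 < μ) (u : EuclideanSpace ℝ (Fin d))
    (hgrad : ∀ t z, HasGradientAt (f t) (g t z) z)
    (hsc : ∀ t z w, f t z ≥ f t w + ⟪g t w, z - w⟫ + μ / 2 * ‖z - w‖ ^ 2)
    (hSclosed : ∀ t, IsClosed (S t)) (hSne : ∀ t, (S t).Nonempty)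
    (hSconv : ∀ t, Convex ℝ (S t))
    (hω : ∀ t, ∀ a ∈ S t, Metric.infDist a (S (t + 1)) ≤ ω (t + 1))
    (hG : ∀ t, ‖g t (x t)‖ ≤ G)
    (hx1 : x 1 ∈ S 1)
    (hproj : ∀ t, x (t + 1) ∈ S (t + 1) ∧
      ∀ z ∈ S (t + 1),
        ‖x (t + 1) - (x t - (1 / (t * μ)) • g t (x t))‖ ≤
          ‖z - (x t - (1 / (t * μ)) • g t (x t))‖) :
    ∑ t ∈ Icc 1 T, (f t (x t) - f t u) ≤
      G ^ 2 / μ * (1 + Real.log T) +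
        ∑ t ∈ Icc 1 (T - 1),
          (ω (t + 1) / (1 / (t * μ)) + G) * Metric.infDist u (S (t + 1)) := by
  have hG0 : 0 ≤ G := le_trans (norm_nonneg _) (hG 0)
  have hmem : ∀ t : ℕ, 1 ≤ t → x t ∈ S t := by
    intro t ht
    obtain ⟨n, rfl⟩ : ∃ n, t = n + 1 := ⟨t - 1, by omega⟩
    exact (hproj n).1
  -- base per-step inequality
  have base : ∀ t : ℕ, 1 ≤ t →
      f t (x t) - f t u ≤ ((t:ℝ) - 1) * μ / 2 * ‖x t - u‖ ^ 2
        - (t:ℝ) * μ / 2 * ‖x t - (1 / ((t:ℝ) * μ)) • g t (x t) - u‖ ^ 2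
        + 1 / (2 * (t:ℝ) * μ) * G ^ 2 := by
    intro t ht
    have ht0 : (0:ℝ) < (t:ℝ) := by exact_mod_cast ht
    have hη : (0:ℝ) < 1 / ((t:ℝ) * μ) := by positivity
    set η : ℝ := 1 / ((t:ℝ) * μ) with hηdef
    have hsc' := hsc t u (x t)
    have hinner : ⟪g t (x t), u - x t⟫ = - ⟪x t - u, g t (x t)⟫ := by
      rw [real_inner_comm, ← inner_neg_left, neg_sub]
    have hb : ‖x t - η • g t (x t) - u‖ ^ 2
        = ‖x t - u‖ ^ 2 - 2 * (η * ⟪x t - u, g t (x t)⟫) + η ^ 2 * ‖g t (x t)‖ ^ 2 := by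
      have : x t - η • g t (x t) - u = (x t - u) - η • g t (x t) := by abel
      rw [this, norm_sub_sq_real, real_inner_smul_right, norm_smul, Real.norm_eq_abs,
        abs_of_pos hη, mul_pow]
    have hgsq : ‖g t (x t)‖ ^ 2 ≤ G ^ 2 := by
      have := hG t
      nlinarith [norm_nonneg (g t (x t))]
    have hnu : ‖u - x t‖ ^ 2 = ‖x t - u‖ ^ 2 := by rw [norm_sub_rev]
    have htμ : (t:ℝ) * μ * η = 1 := by
      rw [hηdef]; field_simp
    have hη2 : η ^ 2 * ‖g t (x t)‖ ^ 2 ≤ η ^ 2 * G ^ 2 := by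
      apply mul_le_mul_of_nonneg_left hgsq (by positivity)
    -- f t (x t) - f t u ≤ ⟪x t - u, g⟫ - μ/2 ‖x t - u‖^2
    have step1 : f t (x t) - f t u ≤ ⟪x t - u, g t (x t)⟫ - μ / 2 * ‖x t - u‖ ^ 2 := by
      rw [hinner] at hsc'; rw [hnu] at hsc'; linarith
    -- ⟪x t - u, g⟫ = (a - b)/(2η) + η/2 ‖g‖^2 ; multiply things out
    have key : (t:ℝ) * μ / 2 * (2 * (η * ⟪x t - u, g t (x t)⟫))
        = ⟪x t - u, g t (x t)⟫ := by
      have : (t:ℝ) * μ / 2 * (2 * (η * ⟪x t - u, g t (x t)⟫))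
          = ((t:ℝ) * μ * η) * ⟪x t - u, g t (x t)⟫ := by ring
      rw [this, htμ, one_mul]
    have hb2 : (t:ℝ) * μ / 2 * ‖x t - η • g t (x t) - u‖ ^ 2
        = (t:ℝ) * μ / 2 * ‖x t - u‖ ^ 2 - ⟪x t - u, g t (x t)⟫
          + (t:ℝ) * μ / 2 * (η ^ 2 * ‖g t (x t)‖ ^ 2) := by
      rw [hb]; linear_combination -key
    have hlast : (t:ℝ) * μ / 2 * (η ^ 2 * G ^ 2) = 1 / (2 * (t:ℝ) * μ) * (((t:ℝ)*μ*η)^2) * G ^ 2 := by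
      rw [hηdef]; field_simp
    rw [htμ] at hlast
    have hlast2 : (t:ℝ) * μ / 2 * (η ^ 2 * ‖g t (x t)‖ ^ 2) ≤ 1 / (2 * (t:ℝ) * μ) * G ^ 2 := by
      have h1 : (t:ℝ) * μ / 2 * (η ^ 2 * ‖g t (x t)‖ ^ 2) ≤ (t:ℝ) * μ / 2 * (η ^ 2 * G ^ 2) := by
        apply mul_le_mul_of_nonneg_left hη2 (by positivity)
      calc (t:ℝ) * μ / 2 * (η ^ 2 * ‖g t (x t)‖ ^ 2) ≤ (t:ℝ) * μ / 2 * (η ^ 2 * G ^ 2) := h1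
        _ = 1 / (2 * (t:ℝ) * μ) * G ^ 2 := by rw [hlast]; ring
    linarith [hb2, step1, hlast2]
  -- full per-step inequality with telescoping term
  have keyT : ∀ t : ℕ, 1 ≤ t →
      f t (x t) - f t u + (t:ℝ) * μ / 2 * ‖x (t + 1) - u‖ ^ 2 ≤
        ((t:ℝ) - 1) * μ / 2 * ‖x t - u‖ ^ 2 + 1 / (2 * (t:ℝ) * μ) * G ^ 2
          + (ω (t + 1) * ((t:ℝ) * μ) + G) * Metric.infDist u (S (t + 1)) := by
    intro t ht
    have ht0 : (0:ℝ) < (t:ℝ) := by exact_mod_cast ht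
    have hη : (0:ℝ) < 1 / ((t:ℝ) * μ) := by positivity
    obtain ⟨v, hvS, hvd⟩ := (hSclosed (t + 1)).exists_infDist_eq_dist (hSne (t + 1)) u
    obtain ⟨w, hwS, hwd⟩ := (hSclosed (t + 1)).exists_infDist_eq_dist (hSne (t + 1)) (x t)
    have hd0 : 0 ≤ Metric.infDist u (S (t + 1)) := Metric.infDist_nonneg
    have hvu : ‖v - u‖ = Metric.infDist u (S (t + 1)) := by
      rw [hvd, dist_eq_norm, norm_sub_rev]
    have hω' : Metric.infDist (x t) (S (t + 1)) ≤ ω (t + 1) := hω t (x t) (hmem t ht)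
    have hwx : ‖w - x t‖ ≤ ω (t + 1) := by
      rw [← norm_sub_rev, ← dist_eq_norm, ← hwd]; exact hω'
    -- distance moved by gradient step + projection
    have hstep : ‖x (t + 1) - (x t - (1 / ((t:ℝ) * μ)) • g t (x t))‖
        ≤ 1 / ((t:ℝ) * μ) * G + ω (t + 1) := by
      have h1 := (hproj t).2 w hwS
      have h2 : ‖w - (x t - (1 / ((t:ℝ) * μ)) • g t (x t))‖
          ≤ ‖w - x t‖ + ‖(1 / ((t:ℝ) * μ)) • g t (x t)‖ := by
        have : w - (x t - (1 / ((t:ℝ) * μ)) • g t (x t))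
            = (w - x t) + (1 / ((t:ℝ) * μ)) • g t (x t) := by abel
        rw [this]; exact norm_add_le _ _
      have h3 : ‖(1 / ((t:ℝ) * μ)) • g t (x t)‖ = 1 / ((t:ℝ) * μ) * ‖g t (x t)‖ := by
        rw [norm_smul, Real.norm_eq_abs, abs_of_pos hη]
      have h4 : 1 / ((t:ℝ) * μ) * ‖g t (x t)‖ ≤ 1 / ((t:ℝ) * μ) * G :=
        mul_le_mul_of_nonneg_left (hG t) (le_of_lt hη)
      calc ‖x (t + 1) - (x t - (1 / ((t:ℝ) * μ)) • g t (x t))‖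
          ≤ ‖w - (x t - (1 / ((t:ℝ) * μ)) • g t (x t))‖ := h1
        _ ≤ ‖w - x t‖ + ‖(1 / ((t:ℝ) * μ)) • g t (x t)‖ := h2
        _ ≤ 1 / ((t:ℝ) * μ) * G + ω (t + 1) := by rw [h3]; linarith
    have hcontract : ‖x (t + 1) - v‖ ≤ ‖x t - (1 / ((t:ℝ) * μ)) • g t (x t) - v‖ :=
      proj_contract (hSconv (t + 1)) (hproj t).1 (hproj t).2 hvS
    -- expansions
    have e1 : ‖x (t + 1) - u‖ ^ 2
        = ‖x (t + 1) - v‖ ^ 2 + 2 * ⟪x (t + 1) - v, v - u⟫ + ‖v - u‖ ^ 2 := by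
      rw [← norm_add_sq_real, sub_add_sub_cancel]
    have e2 : ‖x t - (1 / ((t:ℝ) * μ)) • g t (x t) - u‖ ^ 2
        = ‖x t - (1 / ((t:ℝ) * μ)) • g t (x t) - v‖ ^ 2
          + 2 * ⟪x t - (1 / ((t:ℝ) * μ)) • g t (x t) - v, v - u⟫ + ‖v - u‖ ^ 2 := by
      rw [← norm_add_sq_real, sub_add_sub_cancel]
    have e3 : ⟪x (t + 1) - v, v - u⟫ - ⟪x t - (1 / ((t:ℝ) * μ)) • g t (x t) - v, v - u⟫
        = ⟪x (t + 1) - (x t - (1 / ((t:ℝ) * μ)) • g t (x t)), v - u⟫ := by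
      rw [← inner_sub_left]; congr 1; abel
    have e4 : ⟪x (t + 1) - (x t - (1 / ((t:ℝ) * μ)) • g t (x t)), v - u⟫
        ≤ ‖x (t + 1) - (x t - (1 / ((t:ℝ) * μ)) • g t (x t))‖ * ‖v - u‖ :=
      real_inner_le_norm _ _
    have hbb : ‖x (t + 1) - u‖ ^ 2 ≤ ‖x t - (1 / ((t:ℝ) * μ)) • g t (x t) - u‖ ^ 2
        + 2 * (1 / ((t:ℝ) * μ) * G + ω (t + 1)) * Metric.infDist u (S (t + 1)) := by
      have h5 : ‖x (t + 1) - (x t - (1 / ((t:ℝ) * μ)) • g t (x t))‖ * ‖v - u‖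
          ≤ (1 / ((t:ℝ) * μ) * G + ω (t + 1)) * Metric.infDist u (S (t + 1)) := by
        rw [hvu]
        exact mul_le_mul_of_nonneg_right hstep hd0
      nlinarith [hcontract, norm_nonneg (x (t + 1) - v),
        norm_nonneg (x t - (1 / ((t:ℝ) * μ)) • g t (x t) - v)]
    have hb := base t ht
    have hmul := mul_le_mul_of_nonneg_left hbb
      (by positivity : (0:ℝ) ≤ (t:ℝ) * μ / 2)
    have htμη : (t:ℝ) * μ * (1 / ((t:ℝ) * μ)) = 1 := by field_simp
    have expand : (t:ℝ) * μ / 2 * (‖x t - (1 / ((t:ℝ) * μ)) • g t (x t) - u‖ ^ 2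
          + 2 * (1 / ((t:ℝ) * μ) * G + ω (t + 1)) * Metric.infDist u (S (t + 1)))
        = (t:ℝ) * μ / 2 * ‖x t - (1 / ((t:ℝ) * μ)) • g t (x t) - u‖ ^ 2
          + (ω (t + 1) * ((t:ℝ) * μ) + G) * Metric.infDist u (S (t + 1)) := by
      linear_combination (G * Metric.infDist u (S (t + 1))) * htμη
    rw [expand] at hmul
    linarith
  -- telescoped partial-sum bound
  have Q : ∀ n : ℕ,
      ∑ t ∈ Icc 1 n, (f t (x t) - f t u) + (n:ℝ) * μ / 2 * ‖x (n + 1) - u‖ ^ 2 ≤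
        G ^ 2 / (2 * μ) * ∑ t ∈ Icc 1 n, (1:ℝ) / t
          + ∑ t ∈ Icc 1 n, (ω (t + 1) * ((t:ℝ) * μ) + G) * Metric.infDist u (S (t + 1)) := by
    intro n
    induction n with
    | zero => simp
    | succ n ih =>
      rw [Finset.sum_Icc_succ_top (by omega : 1 ≤ n + 1),
        Finset.sum_Icc_succ_top (by omega : 1 ≤ n + 1),
        Finset.sum_Icc_succ_top (by omega : 1 ≤ n + 1)]
      have hk := keyT (n + 1) (by omega)
      have heq := ogd_div_helper (G ^ 2) μ ((n:ℝ) + 1)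
      push_cast at hk heq ih ⊢
      linarith
  -- assemble
  have hT1 : T - 1 + 1 = T := by omega
  have hQ := Q (T - 1)
  rw [hT1] at hQ
  have hcast : ((T - 1 : ℕ) : ℝ) = (T:ℝ) - 1 := by
    rw [Nat.cast_sub hT]; norm_num
  rw [hcast] at hQ
  have hsum : ∑ t ∈ Icc 1 T, (f t (x t) - f t u)
      = ∑ t ∈ Icc 1 (T - 1), (f t (x t) - f t u) + (f T (x T) - f T u) := by
    have h := Finset.sum_Icc_succ_top (by omega : 1 ≤ T - 1 + 1)
      (fun t => f t (x t) - f t u)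
    rw [hT1] at h
    exact h
  have hsum2 : ∑ t ∈ Icc 1 T, (1:ℝ) / t
      = ∑ t ∈ Icc 1 (T - 1), (1:ℝ) / t + 1 / (T:ℝ) := by
    have h := Finset.sum_Icc_succ_top (by omega : 1 ≤ T - 1 + 1)
      (fun t : ℕ => (1:ℝ) / t)
    rw [hT1] at h
    exact h
  have hlastpos : 0 ≤ (T:ℝ) * μ / 2 *
      ‖x T - (1 / ((T:ℝ) * μ)) • g T (x T) - u‖ ^ 2 := by positivity
  have hbaseT := base T hT
  have hT0 : (0:ℝ) < (T:ℝ) := by exact_mod_cast hT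
  have heqT := ogd_div_helper (G ^ 2) μ (T:ℝ)
  have hnorm0 : 0 ≤ ((T:ℝ) - 1) * μ / 2 * ‖x T - u‖ ^ 2 * 0 := by simp
  -- combine everything
  have hmain : ∑ t ∈ Icc 1 T, (f t (x t) - f t u) ≤
      G ^ 2 / (2 * μ) * ∑ t ∈ Icc 1 T, (1:ℝ) / t
        + ∑ t ∈ Icc 1 (T - 1), (ω (t + 1) * ((t:ℝ) * μ) + G) * Metric.infDist u (S (t + 1)) := by
    rw [hsum, hsum2, mul_add, heqT]
    have hsq : 0 ≤ ‖x (T - 1 + 1) - u‖ ^ 2 := by positivity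
    rw [hT1] at hsq
    linarith
  have hharm := harmonic_le_log hT
  have hlogT : 0 ≤ Real.log (T:ℝ) := Real.log_nonneg (by exact_mod_cast hT)
  have hGμ : 0 ≤ G ^ 2 / (2 * μ) := by positivity
  have hfinal : G ^ 2 / (2 * μ) * ∑ t ∈ Icc 1 T, (1:ℝ) / t
      ≤ G ^ 2 / μ * (1 + Real.log (T:ℝ)) := by
    have h1 : G ^ 2 / (2 * μ) * ∑ t ∈ Icc 1 T, (1:ℝ) / t
        ≤ G ^ 2 / (2 * μ) * (1 + Real.log (T:ℝ)) :=
      mul_le_mul_of_nonneg_left hharm hGμ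
    have h2 : G ^ 2 / (2 * μ) * (1 + Real.log (T:ℝ))
        ≤ G ^ 2 / μ * (1 + Real.log (T:ℝ)) := by
      apply mul_le_mul_of_nonneg_right _ (by linarith)
      rw [div_le_div_iff₀ (by positivity) hμ]
      nlinarith
    linarith
  have hstray : ∑ t ∈ Icc 1 (T - 1),
        (ω (t + 1) / (1 / ((t:ℝ) * μ)) + G) * Metric.infDist u (S (t + 1))
      = ∑ t ∈ Icc 1 (T - 1),
        (ω (t + 1) * ((t:ℝ) * μ) + G) * Metric.infDist u (S (t + 1)) := by
    refine Finset.sum_congr rfl fun t _ => ?_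
    rw [one_div, div_eq_mul_inv, inv_inv]
  rw [hstray]
  linarith
end

section
/- Let u ∈ ℝ^d, δ ∈ (0,1], and let g ∈ ℝ^d satisfy the angular condition ⟨g, x − u⟩ ≥ δ‖g‖‖x − u‖ for a given x ∈ ℝ^d. Let f(z) = (2/δ)‖z − u‖ and let f^γ be its Moreau envelope with parameter γ > 0. If ‖x − u‖ ≥ 2γ/δ, then ⟨∇f^γ(x), g⟩ ≥ 2‖g‖. -/
open RealInnerProductSpace

/-- The Moreau envelope of `f` with parameter `γ`. -/
noncomputable def moreauEnv {d : ℕ} (f : EuclideanSpace ℝ (Fin d) → ℝ) (γ : ℝ)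
    (x : EuclideanSpace ℝ (Fin d)) : ℝ :=
  ⨅ y : EuclideanSpace ℝ (Fin d), (f y + ‖y - x‖ ^ 2 / (2 * γ))

lemma hasFDerivAt_norm_sub_aux {d : ℕ} (u x : EuclideanSpace ℝ (Fin d)) (hx : x - u ≠ 0) :
    HasFDerivAt (fun y => ‖y - u‖) ((‖x - u‖)⁻¹ • innerSL ℝ (x - u)) x := by
  have hr : ‖x - u‖ ≠ 0 := norm_ne_zero_iff.mpr hx
  have hq : HasFDerivAt (fun y : EuclideanSpace ℝ (Fin d) => ‖y - u‖ ^ 2)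
      (2 • innerSL ℝ (x - u)) x := by
    have := ((hasFDerivAt_id x).sub_const u).norm_sq
    simpa using this
  have hs : HasDerivAt Real.sqrt (1 / (2 * Real.sqrt (‖x - u‖ ^ 2))) (‖x - u‖ ^ 2) :=
    Real.hasDerivAt_sqrt (by positivity)
  have hc := hs.comp_hasFDerivAt x hq
  have heq : (fun y : EuclideanSpace ℝ (Fin d) => Real.sqrt (‖y - u‖ ^ 2))
      = fun y => ‖y - u‖ := by
    funext y; rw [Real.sqrt_sq (norm_nonneg _)]
  rw [show Real.sqrt ∘ (fun y : EuclideanSpace ℝ (Fin d) => ‖y - u‖ ^ 2)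
      = fun y => ‖y - u‖ from funext fun y => Real.sqrt_sq (norm_nonneg _)] at hc
  refine hc.congr_fderiv ?_
  rw [Real.sqrt_sq (norm_nonneg _)]
  ext w
  simp only [ContinuousLinearMap.smul_apply, ContinuousLinearMap.coe_smul', Pi.smul_apply,
    innerSL_apply_apply, smul_eq_mul]
  field_simp
  ring

theorem moreau_grad_inner_ge_far {d : ℕ}
    (u x g gr : EuclideanSpace ℝ (Fin d)) (δ γ : ℝ)
    (hδ : δ ∈ Set.Ioc (0:ℝ) 1) (hγ : 0 < γ)
    (hang : ⟪g, x - u⟫ ≥ δ * ‖g‖ * ‖x - u‖)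
    (hfar : ‖x - u‖ ≥ 2 * γ / δ)
    (hgr : HasGradientAt (moreauEnv (fun z => (2 / δ) * ‖z - u‖) γ) gr x) :
    ⟪gr, g⟫ ≥ 2 * ‖g‖ := by
  obtain ⟨hδ0, hδ1⟩ := hδ
  set a : ℝ := 2 / δ with ha
  have ha0 : 0 < a := by positivity
  set r : ℝ := ‖x - u‖ with hrdef
  have hr0 : 0 < r := lt_of_lt_of_le (by positivity) hfar
  have hxu : x - u ≠ 0 := by
    intro h; rw [hrdef, h, norm_zero] at hr0; exact lt_irrefl 0 hr0
  have haγr : a * γ ≤ r := by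
    rw [ha]; rw [ge_iff_le, div_le_iff₀ hδ0] at hfar
    rw [div_mul_eq_mul_div, div_le_iff₀ hδ0]
    calc 2 * γ ≤ r * δ := hfar
    _ = r * δ := rfl
  set f : EuclideanSpace ℝ (Fin d) → ℝ := fun z => a * ‖z - u‖ with hf
  -- pointwise lower bound
  have key : ∀ y z : EuclideanSpace ℝ (Fin d),
      a * ‖y - u‖ - a ^ 2 * γ / 2 ≤ f z + ‖z - y‖ ^ 2 / (2 * γ) := by
    intro y z
    have h1 : ‖y - u‖ ≤ ‖y - z‖ + ‖z - u‖ := norm_sub_le_norm_sub_add_norm_sub y z u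
    have h3 : ‖y - z‖ = ‖z - y‖ := norm_sub_rev _ _
    have h2 : a * ‖z - y‖ - a ^ 2 * γ / 2 ≤ ‖z - y‖ ^ 2 / (2 * γ) := by
      rw [le_div_iff₀ (by positivity : (0:ℝ) < 2 * γ)]
      nlinarith [sq_nonneg (‖z - y‖ - a * γ), hγ.le]
    have h4 : a * ‖y - u‖ ≤ a * (‖y - z‖ + ‖z - u‖) :=
      mul_le_mul_of_nonneg_left h1 ha0.le
    simp only [hf]
    nlinarith
  have hlb : ∀ y, a * ‖y - u‖ - a ^ 2 * γ / 2 ≤ moreauEnv f γ y := fun y =>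
    le_ciInf fun z => key y z
  have hub : moreauEnv f γ x ≤ a * r - a ^ 2 * γ / 2 := by
    have hbdd : BddBelow (Set.range fun z => f z + ‖z - x‖ ^ 2 / (2 * γ)) :=
      ⟨a * r - a ^ 2 * γ / 2, by rintro _ ⟨z, rfl⟩; exact key x z⟩
    have hle := ciInf_le hbdd (x - (a * γ / r) • (x - u))
    refine le_trans hle (le_of_eq ?_)
    have hz1 : x - (a * γ / r) • (x - u) - u = (1 - a * γ / r) • (x - u) := by
      rw [sub_smul, one_smul]; abel
    have hz2 : x - (a * γ / r) • (x - u) - x = -((a * γ / r) • (x - u)) := by abel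
    have hn1 : ‖x - (a * γ / r) • (x - u) - u‖ = r - a * γ := by
      rw [hz1, norm_smul, Real.norm_eq_abs, ← hrdef,
        abs_of_nonneg (by rw [sub_nonneg, div_le_one hr0]; exact haγr)]
      field_simp
    have hn2 : ‖x - (a * γ / r) • (x - u) - x‖ = a * γ := by
      rw [hz2, norm_neg, norm_smul, Real.norm_eq_abs, ← hrdef,
        abs_of_nonneg (by positivity)]
      field_simp
    simp only [hf, hn1, hn2]
    field_simp
    ring
  have hex : moreauEnv f γ x = a * r - a ^ 2 * γ / 2 :=
    le_antisymm hub (by simpa [← hrdef] using hlb x)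
  -- derivative of the lower-bound function
  have hFh : HasFDerivAt (fun y => a * ‖y - u‖ - a ^ 2 * γ / 2)
      (a • (r⁻¹ • innerSL ℝ (x - u))) x := by
    have := ((hasFDerivAt_norm_sub_aux u x hxu).const_mul a).sub_const (a ^ 2 * γ / 2)
    simpa [← hrdef] using this
  have hGr : HasFDerivAt (moreauEnv f γ)
      ((InnerProductSpace.toDual ℝ (EuclideanSpace ℝ (Fin d))) gr) x :=
    hgr.hasFDerivAt
  have hφ : HasFDerivAt (fun y => moreauEnv f γ y - (a * ‖y - u‖ - a ^ 2 * γ / 2))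
      ((InnerProductSpace.toDual ℝ (EuclideanSpace ℝ (Fin d))) gr
        - a • (r⁻¹ • innerSL ℝ (x - u))) x := hGr.sub hFh
  have hmin : IsLocalMin (fun y => moreauEnv f γ y - (a * ‖y - u‖ - a ^ 2 * γ / 2)) x := by
    apply Filter.Eventually.of_forall
    intro y
    simp only [hex, ← hrdef]
    have := hlb y
    linarith
  have hzero := hmin.hasFDerivAt_eq_zero hφ
  have heq : (InnerProductSpace.toDual ℝ (EuclideanSpace ℝ (Fin d))) gr
      = a • (r⁻¹ • innerSL ℝ (x - u)) := sub_eq_zero.mp hzero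
  have hval : ⟪gr, g⟫ = a * (r⁻¹ * ⟪x - u, g⟫) := by
    have h := DFunLike.congr_fun heq g
    rw [InnerProductSpace.toDual_apply_apply] at h
    simp only [ContinuousLinearMap.smul_apply, innerSL_apply_apply, smul_eq_mul] at h
    exact h
  rw [hval]
  have hang' : ⟪x - u, g⟫ ≥ δ * ‖g‖ * r := by
    rw [real_inner_comm]; exact hang
  have haδ : a * δ = 2 := by rw [ha]; field_simp
  calc a * (r⁻¹ * ⟪x - u, g⟫) ≥ a * (r⁻¹ * (δ * ‖g‖ * r)) := by
        apply mul_le_mul_of_nonneg_left _ ha0.le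
        apply mul_le_mul_of_nonneg_left hang' (by positivity)
  _ = a * δ * ‖g‖ := by field_simp
  _ = 2 * ‖g‖ := by rw [haδ]
end

section
/- Let ν: ℝ^{d₁} × ℝ^{d₂} → ℝ be convex and differentiable in its first argument with ‖∇_x ν(x,y)‖ ≤ G for all (x,y) in a set containing the iterates, and suppose the trajectory satisfies ‖x_t − u‖ ≤ D for t ≤ t₀ and ‖x_t − u‖ ≤ A ρ^{t/n} + B/√T for t > t₀, where ρ ∈ (0,1), A, B, D ≥ 0, n ≥ 1. Then ∑_{t=1}^T (ν(x_t, y_t) − ν(u, y_t)) ≤ G( t₀ D + A·n·ρ^{t₀/n}/(1−ρ^{1/n}) + B√T ). -/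
open RealInnerProductSpace Finset

lemma grad_ineq {E : Type*} [NormedAddCommGroup E] [InnerProductSpace ℝ E] [CompleteSpace E]
    {f : E → ℝ} {g x u : E} (hc : ConvexOn ℝ Set.univ f)
    (hg : HasGradientAt f g x) : f x - f u ≤ ⟪g, x - u⟫ := by
  have hF : HasFDerivAt f ((InnerProductSpace.toDual ℝ E) g) x :=
    hasGradientAt_iff_hasFDerivAt.mp hg
  have hline : HasDerivAt (fun s : ℝ => x + s • (u - x)) (u - x) 0 := by
    simpa using ((hasDerivAt_id (0:ℝ)).smul_const (u - x)).const_add x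
  have hcomp : HasDerivAt (fun s : ℝ => f (x + s • (u - x))) ⟪g, u - x⟫ 0 := by
    have hF' : HasFDerivAt f ((InnerProductSpace.toDual ℝ E) g) (x + (0:ℝ) • (u - x)) := by
      simpa using hF
    have h := hF'.comp_hasDerivAt 0 hline
    simp at h
    exact h
  have hφ : ConvexOn ℝ Set.univ (fun s : ℝ => f (x + s • (u - x))) := by
    have h := hc.comp_affineMap (AffineMap.lineMap x u)
    simp only [Set.preimage_univ] at h
    have heq : (fun s : ℝ => f (x + s • (u - x))) = f ∘ (AffineMap.lineMap x u) := by
      funext s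
      show f _ = f _
      congr 1
      simp only [AffineMap.lineMap_apply, vsub_eq_sub, vadd_eq_add]
      module
    rw [heq]
    exact h
  have := hφ.le_slope_of_hasDerivAt (Set.mem_univ 0) (Set.mem_univ 1) zero_lt_one hcomp
  rw [slope_def_field] at this
  simp at this
  have h2 : ⟪g, u - x⟫ ≤ f u - f x := this
  have h3 : ⟪g, x - u⟫ = -⟪g, u - x⟫ := by
    rw [← inner_neg_right]
    congr 1
    abel
  linarith

theorem regret_from_convergence {d₁ d₂ T t₀ n : ℕ} (hT : 1 ≤ T) (hn : 1 ≤ n)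
    (ν : EuclideanSpace ℝ (Fin d₁) → EuclideanSpace ℝ (Fin d₂) → ℝ)
    (gν : EuclideanSpace ℝ (Fin d₁) → EuclideanSpace ℝ (Fin d₂) → EuclideanSpace ℝ (Fin d₁))
    (x : ℕ → EuclideanSpace ℝ (Fin d₁)) (y : ℕ → EuclideanSpace ℝ (Fin d₂))
    (u : EuclideanSpace ℝ (Fin d₁)) (G A B D ρ : ℝ)
    (hρ : ρ ∈ Set.Ioo (0:ℝ) 1) (hA : 0 ≤ A) (hB : 0 ≤ B) (hD : 0 ≤ D)
    (hconv : ∀ z, ConvexOn ℝ Set.univ (fun w => ν w z))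
    (hgrad : ∀ z w, HasGradientAt (fun w' => ν w' z) (gν w z) w)
    (hG : ∀ t ∈ Icc 1 T, ‖gν (x t) (y t)‖ ≤ G)
    (hnear : ∀ t ∈ Icc 1 T, t ≤ t₀ → ‖x t - u‖ ≤ D)
    (hconvrate : ∀ t ∈ Icc 1 T, t₀ < t →
      ‖x t - u‖ ≤ A * ρ ^ ((t : ℝ) / n) + B / Real.sqrt T) :
    ∑ t ∈ Icc 1 T, (ν (x t) (y t) - ν u (y t)) ≤
      G * (t₀ * D + A * n * ρ ^ ((t₀ : ℝ) / n) / (1 - ρ ^ ((1 : ℝ) / n))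
        + B * Real.sqrt T) := by
  obtain ⟨hρ0, hρ1⟩ := hρ
  have hG0 : 0 ≤ G := le_trans (norm_nonneg _) (hG 1 (mem_Icc.mpr ⟨le_refl 1, hT⟩))
  set r : ℝ := ρ ^ ((1 : ℝ) / n) with hr_def
  have hn0 : (n : ℝ) ≠ 0 := Nat.cast_ne_zero.mpr (by omega)
  have hr0 : 0 < r := Real.rpow_pos_of_pos hρ0 _
  have hr1 : r < 1 := Real.rpow_lt_one hρ0.le hρ1 (by positivity)
  have key : ∀ t : ℕ, ρ ^ ((t : ℝ) / n) = r ^ t := by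
    intro t
    rw [hr_def, ← Real.rpow_natCast (ρ ^ ((1:ℝ)/n)) t, ← Real.rpow_mul hρ0.le]
    congr 1
    field_simp
  have hsqT : 0 < Real.sqrt T := Real.sqrt_pos.mpr (by exact_mod_cast hT)
  -- pointwise bound
  have hpt : ∀ t ∈ Icc 1 T, ν (x t) (y t) - ν u (y t) ≤ G * ‖x t - u‖ := by
    intro t ht
    calc ν (x t) (y t) - ν u (y t) ≤ ⟪gν (x t) (y t), x t - u⟫ :=
          grad_ineq (hconv (y t)) (hgrad (y t) (x t))
      _ ≤ ‖gν (x t) (y t)‖ * ‖x t - u‖ := real_inner_le_norm _ _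
      _ ≤ G * ‖x t - u‖ := mul_le_mul_of_nonneg_right (hG t ht) (norm_nonneg _)
  have hb : ∑ t ∈ Icc 1 T, (ν (x t) (y t) - ν u (y t)) ≤
      ∑ t ∈ Icc 1 T, (if t ≤ t₀ then G * D else G * (A * r ^ t + B / Real.sqrt T)) := by
    apply Finset.sum_le_sum
    intro t ht
    by_cases h : t ≤ t₀
    · simp only [h, if_true]
      exact (hpt t ht).trans (mul_le_mul_of_nonneg_left (hnear t ht h) hG0)
    · simp only [h, if_false]
      refine (hpt t ht).trans (mul_le_mul_of_nonneg_left ?_ hG0)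
      have := hconvrate t ht (by omega)
      rwa [key t] at this
  rw [Finset.sum_ite] at hb
  -- bound the "near" part
  have hcard1 : (Finset.filter (fun t => t ≤ t₀) (Icc 1 T)).card ≤ t₀ := by
    have : Finset.filter (fun t => t ≤ t₀) (Icc 1 T) ⊆ Icc 1 t₀ := by
      intro t ht
      simp only [mem_filter, mem_Icc] at ht ⊢
      omega
    calc _ ≤ (Icc 1 t₀).card := Finset.card_le_card this
      _ = t₀ := by rw [Nat.card_Icc]; omega
  have hnear_sum : ∑ _t ∈ Finset.filter (fun t => t ≤ t₀) (Icc 1 T), G * D ≤ t₀ * (G * D) := by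
    rw [Finset.sum_const, nsmul_eq_mul]
    have := mul_le_mul_of_nonneg_right (show ((Finset.filter (fun t => t ≤ t₀) (Icc 1 T)).card : ℝ) ≤ t₀ by exact_mod_cast hcard1) (by positivity : (0:ℝ) ≤ G * D)
    exact this
  -- bound the "far" part
  have hgeo : ∀ m : ℕ, ∑ i ∈ Finset.range m, r ^ i ≤ 1 / (1 - r) := by
    intro m
    rw [geom_sum_eq (ne_of_lt hr1), ← neg_div_neg_eq]
    have h1 : -(r ^ m - 1) = 1 - r ^ m := by ring
    have h2 : -(r - 1) = 1 - r := by ring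
    rw [h1, h2]
    gcongr <;> nlinarith [pow_nonneg hr0.le m]
  have hfar_sub : Finset.filter (fun t => ¬ t ≤ t₀) (Icc 1 T) ⊆ Ico (t₀ + 1) (T + 1) := by
    intro t ht
    simp only [mem_filter, mem_Icc] at ht
    simp only [mem_Ico]
    omega
  have hpow_sum : ∑ t ∈ Finset.filter (fun t => ¬ t ≤ t₀) (Icc 1 T), r ^ t ≤
      r ^ t₀ * (1 / (1 - r)) := by
    calc ∑ t ∈ Finset.filter (fun t => ¬ t ≤ t₀) (Icc 1 T), r ^ t
        ≤ ∑ t ∈ Ico (t₀ + 1) (T + 1), r ^ t :=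
          Finset.sum_le_sum_of_subset_of_nonneg hfar_sub (fun i _ _ => by positivity)
      _ = ∑ i ∈ Finset.range (T + 1 - (t₀ + 1)), r ^ (t₀ + 1 + i) :=
          Finset.sum_Ico_eq_sum_range _ _ _
      _ = r ^ (t₀ + 1) * ∑ i ∈ Finset.range (T + 1 - (t₀ + 1)), r ^ i := by
          rw [Finset.mul_sum]; congr 1; funext i; rw [pow_add]
      _ ≤ r ^ (t₀ + 1) * (1 / (1 - r)) := by
          apply mul_le_mul_of_nonneg_left (hgeo _) (by positivity)
      _ ≤ r ^ t₀ * (1 / (1 - r)) := by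
          apply mul_le_mul_of_nonneg_right _ (by
            have h1r : 0 < 1 - r := by linarith
            positivity)
          calc r ^ (t₀ + 1) = r ^ t₀ * r := pow_succ r t₀
            _ ≤ r ^ t₀ * 1 := by nlinarith [pow_pos hr0 t₀]
            _ = r ^ t₀ := mul_one _
  have hcard2 : ((Finset.filter (fun t => ¬ t ≤ t₀) (Icc 1 T)).card : ℝ) ≤ T := by
    have : (Finset.filter (fun t => ¬ t ≤ t₀) (Icc 1 T)).card ≤ (Icc 1 T).card :=
      Finset.card_filter_le _ _
    have h2 : (Icc 1 T).card = T := by rw [Nat.card_Icc]; omega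
    exact_mod_cast h2 ▸ this
  have hfar_sum : ∑ t ∈ Finset.filter (fun t => ¬ t ≤ t₀) (Icc 1 T),
      G * (A * r ^ t + B / Real.sqrt T) ≤
      G * A * (r ^ t₀ * (1 / (1 - r))) + G * B * Real.sqrt T := by
    have hsplit : ∀ t : ℕ, G * (A * r ^ t + B / Real.sqrt T) =
        G * A * r ^ t + G * (B / Real.sqrt T) := fun t => by ring
    simp_rw [hsplit]
    rw [Finset.sum_add_distrib, Finset.sum_const, nsmul_eq_mul, ← Finset.mul_sum]
    have h1 : G * A * ∑ t ∈ Finset.filter (fun t => ¬ t ≤ t₀) (Icc 1 T), r ^ t ≤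
        G * A * (r ^ t₀ * (1 / (1 - r))) :=
      mul_le_mul_of_nonneg_left hpow_sum (by positivity)
    have h2 : ((Finset.filter (fun t => ¬ t ≤ t₀) (Icc 1 T)).card : ℝ) * (G * (B / Real.sqrt T)) ≤
        G * B * Real.sqrt T := by
      calc ((Finset.filter (fun t => ¬ t ≤ t₀) (Icc 1 T)).card : ℝ) * (G * (B / Real.sqrt T))
          ≤ (T : ℝ) * (G * (B / Real.sqrt T)) :=
            mul_le_mul_of_nonneg_right hcard2 (by positivity)
        _ = G * B * ((T : ℝ) / Real.sqrt T) := by ring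
        _ = G * B * Real.sqrt T := by rw [Real.div_sqrt]
    linarith
  -- combine
  have hfinal : (t₀ : ℝ) * (G * D) + (G * A * (r ^ t₀ * (1 / (1 - r))) + G * B * Real.sqrt T) ≤
      G * (t₀ * D + A * n * ρ ^ ((t₀ : ℝ) / n) / (1 - r) + B * Real.sqrt T) := by
    rw [key t₀]
    have hrpos : 0 < 1 - r := by linarith
    have h1 : G * A * (r ^ t₀ * (1 / (1 - r))) ≤ G * (A * n * r ^ t₀ / (1 - r)) := by
      have hn1 : (1 : ℝ) ≤ n := by exact_mod_cast hn
      simp only [div_eq_mul_inv, one_mul]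
      nlinarith [mul_nonneg (mul_nonneg (mul_nonneg hG0 hA) (pow_pos hr0 t₀).le)
        (inv_pos.mpr hrpos).le, hn1]
    nlinarith [h1]
  calc ∑ t ∈ Icc 1 T, (ν (x t) (y t) - ν u (y t))
      ≤ _ := hb
    _ ≤ (t₀ : ℝ) * (G * D) + (G * A * (r ^ t₀ * (1 / (1 - r))) + G * B * Real.sqrt T) := by
        exact add_le_add hnear_sum hfar_sum
    _ ≤ _ := hfinal
end
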